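/- For 1 ≤ m ≤ n-2, the polynomial g_{m,n}(r) = (r-1)(r^{m+n+1} + 1) + 2r(r^m - r^n) has exactly one real root in the interval (1,∞). -/

import Mathlib

open Finset Set

/-- Auxiliary function: `uu m n r = g_{m,n}(r) / ((r-1) r^n)` (for `r > 1`). -/
noncomputable def uu (m n : ℕ) (r : ℝ) : ℝ :=
  r ^ (m + 1) + r ^ (-(n : ℤ)) - 2 * ∑ j ∈ Finset.Icc (m + 1) n, r ^ ((j : ℤ) - (n : ℤ))

lemma geom_aux (m n : ℕ) (hmn : m ≤ n) (r : ℝ) :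
    (r - 1) * ∑ j ∈ Finset.Icc (m + 1) n, r ^ j = r ^ (n + 1) - r ^ (m + 1) := by
  have h : Finset.Icc (m + 1) n = Finset.Ico (m + 1) (n + 1) := by
    rw [Finset.Ico_add_one_right_eq_Icc]
  have g1 : (r - 1) * ∑ i ∈ Finset.range (n + 1), r ^ i = r ^ (n + 1) - 1 := by
    rw [mul_comm]; exact geom_sum_mul r (n + 1)
  have g2 : (r - 1) * ∑ i ∈ Finset.range (m + 1), r ^ i = r ^ (m + 1) - 1 := by
    rw [mul_comm]; exact geom_sum_mul r (m + 1)
  rw [h, Finset.sum_Ico_eq_sub _ (by omega), mul_sub, g1, g2]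
  ring

lemma key_identity (m n : ℕ) (hmn : m ≤ n) (r : ℝ) (hr : r ≠ 0) :
    (r - 1) * (r ^ (m + n + 1) + 1) + 2 * r * (r ^ m - r ^ n)
      = (r - 1) * r ^ n * uu m n r := by
  have hpow : (r : ℝ) ^ n * ∑ j ∈ Finset.Icc (m + 1) n, r ^ ((j : ℤ) - (n : ℤ))
      = ∑ j ∈ Finset.Icc (m + 1) n, r ^ j := by
    rw [Finset.mul_sum]
    refine Finset.sum_congr rfl fun j hj => ?_
    rw [← zpow_natCast r n, ← zpow_add₀ hr, add_sub_cancel, zpow_natCast]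
  have h1 : (r : ℝ) ^ n * r ^ (m + 1) = r ^ (m + n + 1) := by
    rw [← pow_add]; ring_nf
  have h2 : (r : ℝ) ^ n * r ^ (-(n : ℤ)) = 1 := by
    rw [← zpow_natCast r n, ← zpow_add₀ hr, add_neg_cancel, zpow_zero]
  have expand : (r - 1) * r ^ n * uu m n r
      = (r - 1) * (r ^ n * r ^ (m + 1) + r ^ n * r ^ (-(n : ℤ))
          - 2 * (r ^ n * ∑ j ∈ Finset.Icc (m + 1) n, r ^ ((j : ℤ) - (n : ℤ)))) := by
    unfold uu; ring
  rw [expand, hpow, h1, h2]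
  linear_combination 2 * geom_aux m n hmn r

lemma uu_hasDeriv (m n : ℕ) (x : ℝ) (hx : x ≠ 0) :
    HasDerivAt (uu m n)
      ((↑(m + 1) : ℝ) * x ^ m + (↑(-(n : ℤ)) : ℝ) * x ^ (-(n : ℤ) - 1)
        - 2 * ∑ j ∈ Finset.Icc (m + 1) n,
            (↑((j : ℤ) - (n : ℤ)) : ℝ) * x ^ ((j : ℤ) - (n : ℤ) - 1)) x := by
  have h1 : HasDerivAt (fun r : ℝ => r ^ (m + 1)) ((↑(m + 1) : ℝ) * x ^ m) x := by
    simpa using hasDerivAt_pow (m + 1) x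
  have h2 := hasDerivAt_zpow (-(n : ℤ)) x (Or.inl hx)
  have h3 : HasDerivAt (fun r : ℝ => ∑ j ∈ Finset.Icc (m + 1) n, r ^ ((j : ℤ) - (n : ℤ)))
      (∑ j ∈ Finset.Icc (m + 1) n,
        (↑((j : ℤ) - (n : ℤ)) : ℝ) * x ^ ((j : ℤ) - (n : ℤ) - 1)) x :=
    HasDerivAt.fun_sum fun j _ => hasDerivAt_zpow _ x (Or.inl hx)
  exact (h1.add h2).sub (h3.const_mul 2)

lemma uu_deriv_pos (m n : ℕ) (hm : 1 ≤ m) (hmn : m + 2 ≤ n) (x : ℝ) (hx : 1 < x) :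
    0 < (↑(m + 1) : ℝ) * x ^ m + (↑(-(n : ℤ)) : ℝ) * x ^ (-(n : ℤ) - 1)
        - 2 * ∑ j ∈ Finset.Icc (m + 1) n,
            (↑((j : ℤ) - (n : ℤ)) : ℝ) * x ^ ((j : ℤ) - (n : ℤ) - 1) := by
  have hx0 : (0 : ℝ) < x := lt_trans one_pos hx
  have ht : 0 < x ^ (-(n : ℤ) - 1) := zpow_pos hx0 _
  have ht1 : x ^ (-(n : ℤ) - 1) ≤ 1 := by
    calc x ^ (-(n : ℤ) - 1) ≤ x ^ (0 : ℤ) := zpow_le_zpow_right₀ hx.le (by omega)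
    _ = 1 := zpow_zero x
  have hxm : (1 : ℝ) ≤ x ^ m := one_le_pow₀ hx.le
  have hrw : ∑ j ∈ Finset.Icc (m + 1) n,
        (↑((j : ℤ) - (n : ℤ)) : ℝ) * x ^ ((j : ℤ) - (n : ℤ) - 1)
      = -∑ j ∈ Finset.Icc (m + 1) n,
        ((n : ℝ) - (j : ℝ)) * x ^ ((j : ℤ) - (n : ℤ) - 1) := by
    rw [← Finset.sum_neg_distrib]
    refine Finset.sum_congr rfl fun j hj => ?_
    push_cast
    ring
  rw [hrw]
  have hmem : m + 1 ∈ Finset.Icc (m + 1) n := by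
    simp [Finset.mem_Icc]; omega
  have hnonneg : ∀ j ∈ Finset.Icc (m + 1) n,
      0 ≤ ((n : ℝ) - (j : ℝ)) * x ^ ((j : ℤ) - (n : ℤ) - 1) := by
    intro j hj
    rw [Finset.mem_Icc] at hj
    have : (j : ℝ) ≤ n := by exact_mod_cast hj.2
    exact mul_nonneg (by linarith) (zpow_pos hx0 _).le
  have hsingle : ((n : ℝ) - (↑(m + 1) : ℝ)) * x ^ ((↑(m + 1) : ℤ) - (n : ℤ) - 1)
      ≤ ∑ j ∈ Finset.Icc (m + 1) n,
        ((n : ℝ) - (j : ℝ)) * x ^ ((j : ℤ) - (n : ℤ) - 1) :=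
    Finset.single_le_sum hnonneg hmem
  have hz : x ^ (-(n : ℤ) - 1) ≤ x ^ ((↑(m + 1) : ℤ) - (n : ℤ) - 1) :=
    zpow_le_zpow_right₀ hx.le (by omega)
  have hc : (0 : ℝ) ≤ (n : ℝ) - (↑(m + 1) : ℝ) := by
    have : (m + 1 : ℝ) ≤ n := by exact_mod_cast (by omega : m + 1 ≤ n)
    push_cast
    linarith
  have hlb : ((n : ℝ) - (↑(m + 1) : ℝ)) * x ^ (-(n : ℤ) - 1)
      ≤ ∑ j ∈ Finset.Icc (m + 1) n,
        ((n : ℝ) - (j : ℝ)) * x ^ ((j : ℤ) - (n : ℤ) - 1) :=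
    le_trans (mul_le_mul_of_nonneg_left hz hc) hsingle
  have hn2 : (m : ℝ) + 2 ≤ n := by exact_mod_cast hmn
  have hmx : (↑(m + 1) : ℝ) * x ^ (-(n : ℤ) - 1) ≤ (↑(m + 1) : ℝ) * x ^ m := by
    apply mul_le_mul_of_nonneg_left _ (by positivity)
    linarith
  push_cast at hmx hlb ⊢
  nlinarith [ht, hlb, hmx]

lemma uu_contOn (m n : ℕ) : ContinuousOn (uu m n) (Set.Ici 1) := by
  unfold uu
  refine ContinuousOn.sub (ContinuousOn.add ?_ ?_) (continuousOn_const.mul ?_)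
  · exact (continuous_pow _).continuousOn
  · intro x hx
    have hx0 : x ≠ 0 := by
      have : (1 : ℝ) ≤ x := hx
      positivity
    exact (continuousAt_zpow₀ x _ (Or.inl hx0)).continuousWithinAt
  · refine continuousOn_finset_sum _ fun j _ => ?_
    intro x hx
    have hx0 : x ≠ 0 := by
      have : (1 : ℝ) ≤ x := hx
      positivity
    exact (continuousAt_zpow₀ x _ (Or.inl hx0)).continuousWithinAt

lemma uu_one (m n : ℕ) (hmn : m + 2 ≤ n) : uu m n 1 ≤ -2 := by
  simp only [uu, one_pow, one_zpow, Finset.sum_const, nsmul_eq_mul, mul_one]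
  rw [Nat.card_Icc]
  have h2 : 2 ≤ n + 1 - (m + 1) := by omega
  have : (2 : ℝ) ≤ (n + 1 - (m + 1) : ℕ) := by exact_mod_cast h2
  linarith

lemma uu_big (m n : ℕ) (hm : 1 ≤ m) (hmn : m + 2 ≤ n) :
    1 ≤ uu m n (2 * (n : ℝ) + 1) := by
  set R : ℝ := 2 * (n : ℝ) + 1 with hR
  have hn1 : (1 : ℝ) ≤ n := by exact_mod_cast (by omega : 1 ≤ n)
  have hR1 : (1 : ℝ) ≤ R := by rw [hR]; linarith
  have hR0 : (0 : ℝ) < R := by linarith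
  have hsum : ∑ j ∈ Finset.Icc (m + 1) n, R ^ ((j : ℤ) - (n : ℤ))
      ≤ (Finset.Icc (m + 1) n).card • (1 : ℝ) := by
    refine Finset.sum_le_card_nsmul _ _ _ fun j hj => ?_
    rw [Finset.mem_Icc] at hj
    calc R ^ ((j : ℤ) - (n : ℤ)) ≤ R ^ (0 : ℤ) :=
          zpow_le_zpow_right₀ hR1 (by omega)
      _ = 1 := zpow_zero R
  have hcard : ((Finset.Icc (m + 1) n).card : ℝ) ≤ n := by
    rw [Nat.card_Icc]
    exact_mod_cast Nat.cast_le.mpr (by omega : n + 1 - (m + 1) ≤ n)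
  have hpow : R ≤ R ^ (m + 1) := by
    calc R = R ^ 1 := (pow_one R).symm
    _ ≤ R ^ (m + 1) := pow_le_pow_right₀ hR1 (by omega)
  have hzp : (0 : ℝ) < R ^ (-(n : ℤ)) := zpow_pos hR0 _
  have : ∑ j ∈ Finset.Icc (m + 1) n, R ^ ((j : ℤ) - (n : ℤ)) ≤ (n : ℝ) := by
    rw [nsmul_eq_mul, mul_one] at hsum
    linarith
  unfold uu
  linarith

lemma uu_mono (m n : ℕ) (hm : 1 ≤ m) (hmn : m + 2 ≤ n) :
    StrictMonoOn (uu m n) (Set.Ici 1) := by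
  apply strictMonoOn_of_deriv_pos (convex_Ici 1) (uu_contOn m n)
  intro x hx
  rw [interior_Ici] at hx
  have hx1 : (1 : ℝ) < x := hx
  have hx0 : x ≠ 0 := by positivity
  rw [(uu_hasDeriv m n x hx0).deriv]
  exact uu_deriv_pos m n hm hmn x hx1

lemma uu_exists (m n : ℕ) (hm : 1 ≤ m) (hmn : m + 2 ≤ n) :
    ∃ r : ℝ, 1 < r ∧ uu m n r = 0 := by
  set R : ℝ := 2 * (n : ℝ) + 1 with hR
  have hn1 : (1 : ℝ) ≤ n := by exact_mod_cast (by omega : 1 ≤ n)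
  have hR1 : (1 : ℝ) ≤ R := by rw [hR]; linarith
  have hc : ContinuousOn (uu m n) (Set.Icc 1 R) :=
    (uu_contOn m n).mono (Set.Icc_subset_Ici_self)
  have h0 : (0 : ℝ) ∈ Set.Ioo (uu m n 1) (uu m n R) := by
    constructor
    · have := uu_one m n hmn; linarith
    · have := uu_big m n hm hmn; rw [hR]; linarith
  obtain ⟨x, hx, hx0⟩ := intermediate_value_Ioo hR1 hc h0
  exact ⟨x, hx.1, hx0⟩

/-- For `1 ≤ m ≤ n - 2`, the polynomial `g_{m,n}(r) = (r-1)(r^{m+n+1}+1) + 2r(r^m - r^n)`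
has exactly one real root in `(1,∞)`. -/
theorem g_mn_unique_root (m n : ℕ) (hm : 1 ≤ m) (hmn : m + 2 ≤ n) :
    ∃! r : ℝ, 1 < r ∧
      (r - 1) * (r ^ (m + n + 1) + 1) + 2 * r * (r ^ m - r ^ n) = 0 := by
  have hmn' : m ≤ n := by omega
  obtain ⟨r, hr1, hr0⟩ := uu_exists m n hm hmn
  have hrpos : (0 : ℝ) < r := lt_trans one_pos hr1
  refine ⟨r, ⟨hr1, ?_⟩, ?_⟩
  · rw [key_identity m n hmn' r (ne_of_gt hrpos), hr0, mul_zero]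
  · rintro s ⟨hs1, hs0⟩
    have hspos : (0 : ℝ) < s := lt_trans one_pos hs1
    have hkey := key_identity m n hmn' s (ne_of_gt hspos)
    rw [hs0] at hkey
    have h1 : s - 1 ≠ 0 := sub_ne_zero.mpr (ne_of_gt hs1)
    have h2 : s ^ n ≠ 0 := pow_ne_zero _ (ne_of_gt hspos)
    have hs0' : uu m n s = 0 := by
      rcases mul_eq_zero.mp hkey.symm with h | h
      · rcases mul_eq_zero.mp h with h' | h'
        · exact absurd h' h1
        · exact absurd h' h2
      · exact h
    exact (uu_mono m n hm hmn).injOn (Set.mem_Ici.mpr hs1.le)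
      (Set.mem_Ici.mpr hr1.le) (hs0'.trans hr0.symm)
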